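/- A group G is MIF if and only if for every n ≥ 1, G is n-MIF; moreover 1-MIF implies k-MIF for every k: if w₁,…,w_k ∈ G * Fₙ ∖ G and G has no nontrivial mixed identity, then there exist h₁,…,hₙ ∈ G with w_i(h₁,…,hₙ) ≠ 1 for all i = 1,…,k. -/

import Mathlib

/-- Words in the free product `G * Fₙ` of `G` with the free group on `n` generators. -/
abbrev MixedWord (G : Type*) [Group G] (n : ℕ) :=
  Monoid.Coprod G (FreeGroup (Fin n))

/-- Evaluation of a mixed word, mapping the constants through `f` and substituting
`h i` for the `i`-th variable. -/
def MixedWord.evalHom {G H : Type*} [Group G] [Group H] {n : ℕ}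
    (f : G →* H) (h : Fin n → H) (w : MixedWord G n) : H :=
  Monoid.Coprod.lift f (FreeGroup.lift h) w

/-- Evaluation of a mixed word over `G` at `h : Fin n → G`. -/
def MixedWord.eval {G : Type*} [Group G] {n : ℕ} (h : Fin n → G)
    (w : MixedWord G n) : G :=
  w.evalHom (MonoidHom.id G) h

/-- A word `w ∈ G * Fₙ` is nontrivial if it does not lie in (the canonical copy of) `G`. -/
def MixedWord.IsNontrivial {G : Type*} [Group G] {n : ℕ} (w : MixedWord G n) : Prop :=
  w ∉ (Monoid.Coprod.inl : G →* MixedWord G n).range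

/-- `G` is mixed identity free: no nontrivial word in `G * Fₙ` vanishes identically. -/
def MIF (G : Type*) [Group G] : Prop :=
  ∀ (n : ℕ) (w : MixedWord G n), w.IsNontrivial → ∃ h : Fin n → G, w.eval h ≠ 1

/-- `G` is `k`-MIF: any `k` nontrivial words in `G * Fₙ` can be simultaneously
made nontrivial by a single substitution. -/
def kMIF (G : Type*) [Group G] (k : ℕ) : Prop :=
  ∀ (n : ℕ) (w : Fin k → MixedWord G n), (∀ i, (w i).IsNontrivial) →
    ∃ h : Fin n → G, ∀ i, (w i).eval h ≠ 1

namespace MIFAux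

open scoped commutatorElement

/-! ### The iterated commutator gadget -/

section Gadget

variable {H K : Type*} [Group H] [Group K]

/-- `gadget x e b [u₁, …, um]` is the iterated commutator
`⁅…⁅⁅e, x^{-(b+1)} u₁ x^{b+1}⁆, x^{-(b+2)} u₂ x^{b+2}⁆, …⁆`. -/
def gadget (x : H) : H → ℤ → List H → H
  | e, _, [] => e
  | e, b, u :: l => gadget x ⁅e, (x ^ (b + 1))⁻¹ * u * x ^ (b + 1)⁆ (b + 1) l

@[simp] lemma gadget_nil (x e : H) (b : ℤ) : gadget x e b [] = e := rfl

@[simp] lemma gadget_cons (x e u : H) (b : ℤ) (l : List H) :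
    gadget x e b (u :: l) = gadget x ⁅e, (x ^ (b + 1))⁻¹ * u * x ^ (b + 1)⁆ (b + 1) l := rfl

lemma gadget_forces {x e : H} {b : ℤ} {l : List H} (h : gadget x e b l ≠ 1) :
    e ≠ 1 ∧ ∀ u ∈ l, u ≠ 1 := by
  induction l generalizing e b with
  | nil => exact ⟨h, by simp⟩
  | cons u l ih =>
    rw [gadget_cons] at h
    obtain ⟨hc, hl⟩ := ih h
    refine ⟨?_, ?_⟩
    · rintro rfl
      exact hc (by rw [commutatorElement_def]; group)
    · intro v hv
      rcases List.mem_cons.mp hv with rfl | hv'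
      · rintro rfl
        exact hc (by rw [commutatorElement_def]; group)
      · exact hl v hv'

lemma gadget_map (φ : H →* K) (x e : H) (b : ℤ) (l : List H) :
    φ (gadget x e b l) = gadget (φ x) (φ e) b (l.map φ) := by
  induction l generalizing e b with
  | nil => simp
  | cons u l ih =>
    simp only [gadget_cons, List.map_cons, ih, map_commutatorElement, map_mul, map_inv, map_zpow]

end Gadget

/-! ### Reduced words in `CoprodI` -/

section Words

open Monoid.CoprodI

variable {ι : Type*} {M : ι → Type*} [∀ i, Group (M i)]

lemma word_prod_injective [DecidableEq ι] [∀ i, DecidableEq (M i)] :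
    Function.Injective (Word.prod : Word M → Monoid.CoprodI M) :=
  Word.equiv.symm.injective

/-- The product of a nonempty reduced word with distinct first and last indices is not a letter. -/
lemma neword_prod_ne_of {i j i₀ : ι} (hij : i ≠ j) (N : NeWord M i j) (g : M i₀) :
    N.prod ≠ Monoid.CoprodI.of g := by
  classical
  intro h
  by_cases hg : g = 1
  · subst hg
    rw [map_one] at h
    have : N.toWord = Word.empty := word_prod_injective (by simpa [NeWord.prod] using h)
    exact NeWord.toList_ne_nil N (by simpa [NeWord.toWord] using congrArg Word.toList this)
  · set w₁ : Word M := ⟨[⟨i₀, g⟩], by simpa using hg, List.isChain_singleton _⟩ with hw₁def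
    have hw₁ : w₁.prod = Monoid.CoprodI.of g := by
      simp [hw₁def, Word.prod]
    have hNw : N.toWord = w₁ := word_prod_injective (by rw [hw₁]; exact h)
    have hlist : N.toList = [⟨i₀, g⟩] := by
      simpa [NeWord.toWord, hw₁def] using congrArg Word.toList hNw
    have h1 : N.toList.head? = some ⟨i₀, g⟩ := by rw [hlist]; rfl
    have h2 : N.toList.getLast? = some ⟨i₀, g⟩ := by rw [hlist]; rfl
    rw [NeWord.toList_head?, Option.some_inj] at h1
    rw [NeWord.toList_getLast?, Option.some_inj] at h2
    exact hij ((congrArg Sigma.fst h1).trans (congrArg Sigma.fst h2).symm)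

end Words

/-! ### The two-factor free product `(G * Fₙ) * F₁` -/

/-- The two factors: `false ↦ G * Fₙ`, `true ↦ F₁`. -/
def Fac (G : Type) [Group G] (n : ℕ) : Bool → Type
  | false => MixedWord G n
  | true => FreeGroup Unit

instance facGroup (G : Type) [Group G] (n : ℕ) : ∀ b, Group (Fac G n b)
  | false => inferInstanceAs (Group (MixedWord G n))
  | true => inferInstanceAs (Group (FreeGroup Unit))

variable (G : Type) [Group G] (n : ℕ)

/-- The big free product. -/
abbrev P := Monoid.CoprodI (Fac G n)

/-- Inclusion of `G * Fₙ`. -/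
abbrev ofQ : MixedWord G n →* P G n := Monoid.CoprodI.of (M := Fac G n) (i := false)

/-- Inclusion of the extra free group. -/
abbrev ofX : FreeGroup Unit →* P G n := Monoid.CoprodI.of (M := Fac G n) (i := true)

/-- The extra letter. -/
abbrev xP : P G n := ofX G n (FreeGroup.of ())

lemma xi_zpow_ne_one {m : ℤ} (hm : m ≠ 0) :
    (FreeGroup.of () : FreeGroup Unit) ^ m ≠ 1 := by
  intro h
  have h2 := congrArg (FreeGroup.lift fun _ : Unit => Multiplicative.ofAdd (1 : ℤ)) h
  simp only [map_zpow, FreeGroup.lift_apply_of, map_one] at h2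
  exact hm (by simpa [toAdd_zpow] using congrArg Multiplicative.toAdd h2)

/-- Singleton `NeWord` with a power of the extra letter. -/
def sX (m : ℤ) (hm : m ≠ 0) : Monoid.CoprodI.NeWord (Fac G n) true true :=
  Monoid.CoprodI.NeWord.singleton
    (i := true) ((FreeGroup.of () : FreeGroup Unit) ^ m) (xi_zpow_ne_one hm)

lemma sX_prod (m : ℤ) (hm : m ≠ 0) : (sX G n m hm).prod = xP G n ^ m := by
  rw [sX]
  exact (Monoid.CoprodI.NeWord.prod_singleton ..).trans (map_zpow (ofX G n) _ _)

/-- Singleton `NeWord` with a letter from `G * Fₙ`. -/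
def sQ (v : MixedWord G n) (hv : v ≠ 1) : Monoid.CoprodI.NeWord (Fac G n) false false :=
  Monoid.CoprodI.NeWord.singleton (i := false) v hv

lemma sQ_prod (v : MixedWord G n) (hv : v ≠ 1) : (sQ G n v hv).prod = ofQ G n v :=
  Monoid.CoprodI.NeWord.prod_singleton ..

/-- Key structural lemma: the gadget applied to a reduced word times a power of `x`
is again of that shape. -/
lemma gadget_prod (us : List (MixedWord G n)) (hus : ∀ u ∈ us, u ≠ 1) :
    ∀ b : ℤ, 0 ≤ b → ∀ B : Monoid.CoprodI.NeWord (Fac G n) false false,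
      ∃ B' : Monoid.CoprodI.NeWord (Fac G n) false false,
        gadget (xP G n) (B.prod * xP G n ^ b) b (us.map (ofQ G n)) =
          B'.prod * xP G n ^ (b + us.length) := by
  induction us with
  | nil => exact fun b _ B => ⟨B, by simp⟩
  | cons u us ih =>
    intro b hb B
    have hu : u ≠ 1 := hus u List.mem_cons_self
    have hb1 : b + 1 ≠ 0 := by omega
    have hft : (false : Bool) ≠ true := by decide
    have htf : (true : Bool) ≠ false := by decide
    set B₂ : Monoid.CoprodI.NeWord (Fac G n) false false :=
      ((((((B.append hft (sX G n (-1) (by norm_num))).append htf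
          (sQ G n u hu)).append hft (sX G n 1 one_ne_zero)).append htf
          B.inv).append hft (sX G n (-(b+1)) (by omega))).append htf
          (sQ G n u⁻¹ (inv_ne_one.mpr hu))) with hB₂def
    have hprod : B₂.prod = B.prod * xP G n ^ (-1 : ℤ) * ofQ G n u * xP G n ^ (1 : ℤ) *
        B.prod⁻¹ * xP G n ^ (-(b+1)) * ofQ G n u⁻¹ := by
      simp only [hB₂def, Monoid.CoprodI.NeWord.append_prod, sX_prod, sQ_prod,
        Monoid.CoprodI.NeWord.inv_prod]
    have hcomm : ⁅B.prod * xP G n ^ b, (xP G n ^ (b + 1))⁻¹ * ofQ G n u * xP G n ^ (b + 1)⁆ =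
        B₂.prod * xP G n ^ (b + 1) := by
      rw [hprod, commutatorElement_def, map_inv]
      group
    obtain ⟨B', hB'⟩ := ih (fun v hv => hus v (List.mem_cons_of_mem _ hv)) (b + 1)
      (by omega) B₂
    refine ⟨B', ?_⟩
    rw [List.map_cons, gadget_cons, hcomm, hB', List.length_cons]
    congr 2
    push_cast
    ring

variable {G n} in
lemma mixedword_ne_one_of_nontrivial {w : MixedWord G n} (hw : w.IsNontrivial) : w ≠ 1 :=
  fun h => hw ⟨1, by rw [map_one, h]⟩

/-- The main lemma: MIF implies every finite family of nontrivial words can be made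
simultaneously nontrivial. -/
lemma key (hG : MIF G) (k n : ℕ) (w : Fin k → MixedWord G n)
    (hw : ∀ i, (w i).IsNontrivial) : ∃ h : Fin n → G, ∀ i, (w i).eval h ≠ 1 := by
  match k, w, hw with
  | 0, w, hw => exact ⟨fun _ => 1, fun i => i.elim0⟩
  | 1, w, hw =>
    obtain ⟨h, hh⟩ := hG n (w 0) (hw 0)
    exact ⟨h, fun i => by rw [Subsingleton.elim i 0]; exact hh⟩
  | (m + 2), w, hw =>
    -- the embedding `G * Fₙ →* G * F_{n+1}`
    set ι' : MixedWord G n →* MixedWord G (n + 1) :=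
      Monoid.Coprod.map (MonoidHom.id G)
        (FreeGroup.lift fun j : Fin n => FreeGroup.of j.castSucc) with hι'def
    set X : MixedWord G (n + 1) := Monoid.Coprod.inr (FreeGroup.of (Fin.last n)) with hXdef
    set W : MixedWord G (n + 1) :=
      gadget X (ι' (w 0)) 0 (List.ofFn fun i : Fin (m + 1) => ι' (w i.succ)) with hWdef
    -- the comparison map to the CoprodI model
    set φ : MixedWord G (n + 1) →* P G n :=
      Monoid.Coprod.lift ((ofQ G n).comp Monoid.Coprod.inl)
        (FreeGroup.lift (Fin.lastCases (xP G n)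
          (fun j => ofQ G n (Monoid.Coprod.inr (FreeGroup.of j))))) with hφdef
    have hφι : ∀ v, φ (ι' v) = ofQ G n v := by
      intro v
      have : φ.comp ι' = ofQ G n := by
        apply Monoid.Coprod.hom_ext
        · ext g
          simp [hι'def, hφdef, Monoid.Coprod.map_apply_inl]
        · apply FreeGroup.ext_hom
          intro a
          simp only [MonoidHom.comp_apply, hι'def, hφdef, Monoid.Coprod.map_apply_inr,
            FreeGroup.lift_apply_of, Monoid.Coprod.lift_apply_inr]
          rw [Fin.lastCases_castSucc]
      exact DFunLike.congr_fun this v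
    have hφX : φ X = xP G n := by
      simp only [hXdef, hφdef, Monoid.Coprod.lift_apply_inr, FreeGroup.lift_apply_of]
      rw [Fin.lastCases_last]
    have hne1 : ∀ i, w i ≠ 1 := fun i => mixedword_ne_one_of_nontrivial (hw i)
    -- nontriviality of W
    have hWnt : W.IsNontrivial := by
      rintro ⟨g, hg⟩
      have h1 : φ W = gadget (xP G n) (ofQ G n (w 0)) 0
          ((List.ofFn fun i : Fin (m + 1) => w i.succ).map (ofQ G n)) := by
        rw [hWdef, gadget_map, hφX, hφι]
        congr 1
        rw [List.map_ofFn, List.map_ofFn]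
        exact congrArg _ (funext fun i => hφι _)
      obtain ⟨B', hB'⟩ := gadget_prod G n (List.ofFn fun i : Fin (m + 1) => w i.succ)
        (by
          intro u hu
          rw [List.mem_ofFn] at hu
          obtain ⟨i, rfl⟩ := hu
          exact hne1 _)
        0 le_rfl (sQ G n (w 0) (hne1 0))
      rw [sQ_prod] at hB'
      have hlen : ((List.ofFn fun i : Fin (m + 1) => w i.succ).length : ℤ) = (m : ℤ) + 1 := by
        simp
      have hm1 : ((m : ℤ) + 1) ≠ 0 := by positivity
      set N : Monoid.CoprodI.NeWord (Fac G n) false true :=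
        B'.append (by decide) (sX G n ((m : ℤ) + 1) hm1) with hNdef
      have hWof : φ W = Monoid.CoprodI.of (M := Fac G n) (i := false)
          (Monoid.Coprod.inl g) := by
        rw [← hg]
        rfl
      have hNprod : N.prod = Monoid.CoprodI.of (M := Fac G n) (i := false)
          (Monoid.Coprod.inl g) := by
        rw [hNdef, Monoid.CoprodI.NeWord.append_prod, sX_prod, ← hWof, h1,
          show (ofQ G n) (w 0) = (ofQ G n) (w 0) * xP G n ^ (0 : ℤ) from by
            rw [zpow_zero, mul_one],
          hB', hlen, zero_add]
      exact neword_prod_ne_of (i₀ := false) (by decide) N (Monoid.Coprod.inl g) hNprod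
    -- apply MIF to W
    obtain ⟨h, hh⟩ := hG (n + 1) W hWnt
    set Ev : MixedWord G (n + 1) →* G :=
      Monoid.Coprod.lift (MonoidHom.id G) (FreeGroup.lift h) with hEvdef
    have hEvι : ∀ v, Ev (ι' v) = MixedWord.eval (h ∘ Fin.castSucc) v := by
      intro v
      have : Ev.comp ι' =
          Monoid.Coprod.lift (MonoidHom.id G) (FreeGroup.lift (h ∘ Fin.castSucc)) := by
        apply Monoid.Coprod.hom_ext
        · ext g
          simp [hι'def, hEvdef]
        · apply FreeGroup.ext_hom
          intro a
          simp [hι'def, hEvdef]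
      exact DFunLike.congr_fun this v
    have hEvX : Ev X = h (Fin.last n) := by
      simp [hXdef, hEvdef]
    have hEv : MixedWord.eval h W = gadget (h (Fin.last n))
        (MixedWord.eval (h ∘ Fin.castSucc) (w 0)) 0
        (List.ofFn fun i : Fin (m + 1) => MixedWord.eval (h ∘ Fin.castSucc) (w i.succ)) := by
      show Ev W = _
      rw [hWdef, gadget_map, hEvX, hEvι]
      congr 1
      rw [List.map_ofFn]
      exact congrArg _ (funext fun i => hEvι _)
    rw [hEv] at hh
    obtain ⟨h0, hrest⟩ := gadget_forces hh
    refine ⟨h ∘ Fin.castSucc, fun i => ?_⟩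
    refine Fin.cases ?_ (fun j => ?_) i
    · exact h0
    · exact hrest _ (List.mem_ofFn.2 ⟨j, rfl⟩)

end MIFAux

/-- A group is MIF iff it is `k`-MIF for every `k ≥ 1`; in particular, if `G` is MIF
then any finite family of nontrivial mixed words admits a common substitution making
all of them nontrivial. -/
theorem stmt_8 (G : Type) [Group G] :
    (MIF G ↔ ∀ k : ℕ, 1 ≤ k → kMIF G k) ∧
    (MIF G → ∀ (k n : ℕ) (w : Fin k → MixedWord G n), (∀ i, (w i).IsNontrivial) →
      ∃ h : Fin n → G, ∀ i, (w i).eval h ≠ 1) := by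
  refine ⟨⟨fun hG k _ => fun n w hw => MIFAux.key G hG k n w hw, fun hk n w hw => ?_⟩,
    fun hG k n w hw => MIFAux.key G hG k n w hw⟩
  obtain ⟨h, hh⟩ := hk 1 le_rfl n (fun _ => w) (fun _ => hw)
  exact ⟨h, hh 0⟩
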